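/- Let M be a symmetric integer n×n matrix (n ≥ 1) that is not copositive, with binary encoding length L = Σ_{1≤i≤j≤n} (⌈log₂(|m_ij|+1)⌉ + 1) and d = max_{i,j} |m_ij|. Let l be the minimal natural number with 2^l ≥ 4dn². Then there exists a rational vector y ∈ ℚⁿ with nonnegative entries such that yᵀMy < 0 and each coordinate y_j has the form a_j/2^l for a natural number a_j with a_j/2^l ≤ 2^{2L−1} + 1. -/

import Mathlib

open Matrix Finset

/-- Binary encoding length of a symmetric integer matrix:
`L = Σ_{1 ≤ i ≤ j ≤ n} (⌈log₂(|m_ij|+1)⌉ + 1)`. -/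
def encodingLength {n : ℕ} (M : Matrix (Fin n) (Fin n) ℤ) : ℕ :=
  ∑ i : Fin n, ∑ j ∈ Finset.univ.filter (fun j => i ≤ j),
    (Nat.clog 2 ((M i j).natAbs + 1) + 1)

/-- The largest absolute value of an entry of an integer matrix. -/
def maxAbs {n : ℕ} (M : Matrix (Fin n) (Fin n) ℤ) : ℕ :=
  Finset.univ.sup fun p : Fin n × Fin n => (M p.1 p.2).natAbs

lemma quad_symm {n : ℕ} (N : Matrix (Fin n) (Fin n) ℝ) (hsym : Nᵀ = N) (x v : Fin n → ℝ) :
    x ⬝ᵥ N *ᵥ v = v ⬝ᵥ N *ᵥ x := by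
  rw [Matrix.dotProduct_mulVec, ← Matrix.mulVec_transpose, hsym, dotProduct_comm]

lemma quad_expand {n : ℕ} (N : Matrix (Fin n) (Fin n) ℝ) (hsym : Nᵀ = N) (x v : Fin n → ℝ) (t : ℝ) :
    (x + t • v) ⬝ᵥ N *ᵥ (x + t • v)
      = x ⬝ᵥ N *ᵥ x + 2 * t * (v ⬝ᵥ N *ᵥ x) + t ^ 2 * (v ⬝ᵥ N *ᵥ v) := by
  rw [Matrix.mulVec_add, Matrix.mulVec_smul, add_dotProduct, smul_dotProduct,
    dotProduct_add, dotProduct_add, dotProduct_smul, dotProduct_smul,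
    quad_symm N hsym x v]
  simp only [smul_eq_mul]
  ring

lemma quad_smul {n : ℕ} (N : Matrix (Fin n) (Fin n) ℝ) (c : ℝ) (x : Fin n → ℝ) :
    (c • x) ⬝ᵥ N *ᵥ (c • x) = c ^ 2 * (x ⬝ᵥ N *ᵥ x) := by
  rw [Matrix.mulVec_smul, smul_dotProduct, dotProduct_smul]
  simp only [smul_eq_mul]; ring

lemma linear_zero_of_quad (b c ε : ℝ) (hε : 0 < ε)
    (h : ∀ t : ℝ, |t| ≤ ε → 0 ≤ b * t + c * t ^ 2) : b = 0 := by
  by_contra hb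
  have habs : 0 < |b| := abs_pos.2 hb
  set δ : ℝ := min ε (|b| / (2 * (|c| + 1))) with hδdef
  have hδpos : 0 < δ := lt_min hε (by positivity)
  have hδε : δ ≤ ε := min_le_left _ _
  have hδb : δ * (2 * (|c| + 1)) ≤ |b| := by
    have := min_le_right ε (|b| / (2 * (|c| + 1)))
    calc δ * (2 * (|c| + 1)) ≤ (|b| / (2 * (|c| + 1))) * (2 * (|c| + 1)) := by
          apply mul_le_mul_of_nonneg_right this (by positivity)
      _ = |b| := by field_simp
  set t : ℝ := if 0 < b then -δ else δ with htdef
  have habst : |t| = δ := by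
    rcases le_or_gt b 0 with hb' | hb'
    · simp [htdef, not_lt.2 hb', abs_of_pos hδpos]
    · simp [htdef, hb', abs_of_pos hδpos]
  have hbt : b * t = -(|b| * δ) := by
    rcases le_or_gt b 0 with hb' | hb'
    · simp only [htdef, if_neg (not_lt.2 hb')]
      rw [abs_of_nonpos hb']; ring
    · simp only [htdef, if_pos hb']
      rw [abs_of_pos hb']; ring
  have h2 : c * t ^ 2 ≤ |c| * δ ^ 2 := by
    have : c * t ^ 2 ≤ |c| * t ^ 2 := mul_le_mul_of_nonneg_right (le_abs_self c) (sq_nonneg t)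
    calc c * t ^ 2 ≤ |c| * t ^ 2 := this
      _ = |c| * δ ^ 2 := by rw [← sq_abs t, habst]
  have hmain := h t (by rw [habst]; exact hδε)
  nlinarith [hδpos, habs, hδb, sq_nonneg δ]

-- Part 1 : there is a minimizer on the simplex, of minimal support, which is stationary
lemma part1 {n : ℕ} (hn : 1 ≤ n) (N : Matrix (Fin n) (Fin n) ℝ) (hNsym : Nᵀ = N)
    (hncop : ∃ x : Fin n → ℝ, (∀ i, 0 ≤ x i) ∧ x ⬝ᵥ N *ᵥ x < 0) :
    ∃ μ : ℝ, μ < 0 ∧ ∃ x ∈ stdSimplex ℝ (Fin n),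
      x ⬝ᵥ N *ᵥ x = μ ∧
      (∀ i ∈ univ.filter (fun i => 0 < x i), (N *ᵥ x) i = μ) ∧
      (∀ x' ∈ stdSimplex ℝ (Fin n), x' ⬝ᵥ N *ᵥ x' = μ →
        (univ.filter (fun i => 0 < x i)).card ≤ (univ.filter (fun i => 0 < x' i)).card) ∧
      (∀ x' ∈ stdSimplex ℝ (Fin n), μ ≤ x' ⬝ᵥ N *ᵥ x') := by
  classical
  set q : (Fin n → ℝ) → ℝ := fun x => x ⬝ᵥ N *ᵥ x with hq
  have hqcont : Continuous q := by
    have : q = fun x => ∑ i, x i * ∑ j, N i j * x j := by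
      funext x; simp [hq, dotProduct, Matrix.mulVec]
    rw [this]
    exact continuous_finset_sum _ fun i _ => (continuous_apply i).mul
      (continuous_finset_sum _ fun j _ => continuous_const.mul (continuous_apply j))
  -- witness in the simplex with negative value
  obtain ⟨w0, hw0nn, hw0q⟩ := hncop
  have hw0ne : ∃ i, w0 i ≠ 0 := by
    by_contra hc
    push_neg at hc
    have : w0 = 0 := funext hc
    rw [this] at hw0q
    simp at hw0q
  have hs0 : 0 < ∑ i, w0 i := by
    obtain ⟨i, hi⟩ := hw0ne
    exact Finset.sum_pos' (fun j _ => hw0nn j) ⟨i, Finset.mem_univ i, lt_of_le_of_ne (hw0nn i) (Ne.symm hi)⟩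
  set s0 := ∑ i, w0 i with hs0def
  have hxwmem : (s0⁻¹ • w0) ∈ stdSimplex ℝ (Fin n) := by
    constructor
    · intro i
      exact mul_nonneg (inv_nonneg.2 hs0.le) (hw0nn i)
    · simp only [Pi.smul_apply, smul_eq_mul, ← Finset.mul_sum]
      field_simp
      exact hs0def.symm
  have hxwq : q (s0⁻¹ • w0) < 0 := by
    rw [hq]
    simp only
    rw [quad_smul]
    have : (0:ℝ) < (s0⁻¹)^2 := by positivity
    nlinarith
  -- minimizer
  obtain ⟨x₀, hx₀mem, hx₀min⟩ := (isCompact_stdSimplex ℝ (Fin n)).exists_isMinOn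
    ⟨_, hxwmem⟩ hqcont.continuousOn
  set μ := q x₀ with hμdef
  have hmin : ∀ x' ∈ stdSimplex ℝ (Fin n), μ ≤ q x' := fun x' hx' => hx₀min hx'
  have hμneg : μ < 0 := lt_of_le_of_lt (hmin _ hxwmem) hxwq
  -- minimal support minimizer
  have hPex : ∃ k, ∃ x ∈ stdSimplex ℝ (Fin n), q x = μ ∧ (univ.filter (fun i => 0 < x i)).card = k :=
    ⟨_, x₀, hx₀mem, rfl, rfl⟩
  set k := Nat.find hPex with hkdef
  obtain ⟨x, hxmem, hxq, hxcard⟩ := Nat.find_spec hPex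
  have hminsupp : ∀ x' ∈ stdSimplex ℝ (Fin n), q x' = μ →
      (univ.filter (fun i => 0 < x i)).card ≤ (univ.filter (fun i => 0 < x' i)).card := by
    intro x' hx' hq'
    rw [hxcard]
    by_contra hc
    push_neg at hc
    exact Nat.find_min hPex hc ⟨x', hx', hq', rfl⟩
  refine ⟨μ, hμneg, x, hxmem, hxq, ?_, hminsupp, hmin⟩
  -- stationarity
  set S := univ.filter (fun i => 0 < x i) with hSdef
  have hxnn : ∀ i, 0 ≤ x i := hxmem.1
  have hxsum : ∑ i, x i = 1 := hxmem.2
  have hxzero : ∀ i ∉ S, x i = 0 := by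
    intro i hi
    simp only [hSdef, Finset.mem_filter, Finset.mem_univ, true_and, not_lt] at hi
    exact le_antisymm hi (hxnn i)
  have hpair : ∀ i ∈ S, ∀ j ∈ S, (N *ᵥ x) i = (N *ᵥ x) j := by
    intro i hi j hj
    rcases eq_or_ne i j with rfl | hij
    · rfl
    simp only [hSdef, Finset.mem_filter, Finset.mem_univ, true_and] at hi hj
    set v : Fin n → ℝ := Pi.single i 1 - Pi.single j 1 with hvdef
    have hvsum : ∑ r, v r = 0 := by
      simp [hvdef, Finset.sum_sub_distrib]
    have hb : v ⬝ᵥ N *ᵥ x = (N *ᵥ x) i - (N *ᵥ x) j := by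
      simp [hvdef, sub_dotProduct, single_dotProduct]
    set ε := min (x i) (x j) with hεdef
    have hε : 0 < ε := lt_min hi hj
    have hvr : ∀ r, v r = (if r = i then (1:ℝ) else 0) - (if r = j then 1 else 0) := by
      intro r; simp [hvdef, Pi.single_apply]
    have hmem : ∀ t : ℝ, |t| ≤ ε → (x + t • v) ∈ stdSimplex ℝ (Fin n) := by
      intro t ht
      have htl : -ε ≤ t := neg_le_of_abs_le ht
      have htu : t ≤ ε := le_of_abs_le ht
      constructor
      · intro r
        have hxr : (x + t • v) r = x r + t * v r := by simp
        rw [hxr, hvr r]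
        rcases eq_or_ne r i with rfl | hri
        · rw [if_pos rfl, if_neg hij]
          have hεx : ε ≤ x r := min_le_left _ _
          linarith
        rcases eq_or_ne r j with rfl | hrj
        · rw [if_neg hri, if_pos rfl]
          have hεx : ε ≤ x r := min_le_right _ _
          linarith
        · rw [if_neg hri, if_neg hrj]
          simpa using hxnn r
      · have : ∑ r, (x + t • v) r = ∑ r, x r + t * ∑ r, v r := by
          simp [Finset.sum_add_distrib, Finset.mul_sum]
        rw [this, hvsum, hxsum]; ring
    have hzero : (N *ᵥ x) i - (N *ᵥ x) j = 0 := by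
      have := linear_zero_of_quad (2 * ((N *ᵥ x) i - (N *ᵥ x) j)) (v ⬝ᵥ N *ᵥ v) ε hε ?_
      · linarith
      intro t ht
      have h1 : μ ≤ (x + t • v) ⬝ᵥ N *ᵥ (x + t • v) := hmin _ (hmem t ht)
      have h2 := quad_expand N hNsym x v t
      rw [h2] at h1
      have hxq' : x ⬝ᵥ N *ᵥ x = μ := hxq
      rw [hxq', hb] at h1
      nlinarith [h1]
    linarith [hzero]
  intro i hi
  have hSne : S.Nonempty := ⟨i, hi⟩
  have hsumS : ∑ r ∈ S, x r = 1 := by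
    rw [← hxsum]
    exact Finset.sum_subset (Finset.subset_univ S) (fun r _ hr => hxzero r hr)
  have : μ = ∑ r ∈ S, x r * (N *ᵥ x) r := by
    rw [← hxq, hq]
    simp only [dotProduct]
    exact (Finset.sum_subset (Finset.subset_univ S)
      (fun r _ hr => by rw [hxzero r hr]; ring)).symm
  rw [this]
  have : ∀ r ∈ S, x r * (N *ᵥ x) r = x r * (N *ᵥ x) i := by
    intro r hr
    rw [hpair r hr i hi]
  rw [Finset.sum_congr rfl this, ← Finset.sum_mul, hsumS, one_mul]

lemma part2 {n : ℕ} (M : Matrix (Fin n) (Fin n) ℤ)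
    (N : Matrix (Fin n) (Fin n) ℝ) (hNM : N = M.map ((↑) : ℤ → ℝ)) (hNsym : Nᵀ = N)
    (μ : ℝ) (hμneg : μ < 0) (x : Fin n → ℝ) (hxmem : x ∈ stdSimplex ℝ (Fin n))
    (hxq : x ⬝ᵥ N *ᵥ x = μ)
    (hstat : ∀ i ∈ univ.filter (fun i => 0 < x i), (N *ᵥ x) i = μ)
    (hminsupp : ∀ x' ∈ stdSimplex ℝ (Fin n), x' ⬝ᵥ N *ᵥ x' = μ →
      (univ.filter (fun i => 0 < x i)).card ≤ (univ.filter (fun i => 0 < x' i)).card) :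
    ∃ (k : ℕ) (g : Fin k → Fin n), Function.Injective g ∧ k ≤ n ∧
      (1:ℝ) ≤ (-μ) * (((∑ a, ∑ b, (M.submatrix g g).adjugate a b).natAbs : ℝ)) := by
  classical
  set S := univ.filter (fun i => 0 < x i) with hSdef
  have hxnn : ∀ i, 0 ≤ x i := hxmem.1
  have hxsum : ∑ i, x i = 1 := hxmem.2
  have hxzero : ∀ i ∉ S, x i = 0 := by
    intro i hi
    simp only [hSdef, Finset.mem_filter, Finset.mem_univ, true_and, not_lt] at hi
    exact le_antisymm hi (hxnn i)
  set k := S.card with hkdef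
  set e := S.orderIsoOfFin rfl with hedef
  set g : Fin k → Fin n := fun a => (e a : Fin n) with hgdef
  have hgmem : ∀ a, g a ∈ S := fun a => (e a).2
  have hginj : Function.Injective g := fun a b h => e.injective (Subtype.ext h)
  have hgS : ∀ i (hi : i ∈ S), g (e.symm ⟨i, hi⟩) = i := by
    intro i hi
    simp [hgdef]
  have sumS : ∀ u : Fin n → ℝ, (∀ i ∉ S, u i = 0) → ∑ i, u i = ∑ a, u (g a) := by
    intro u hu
    have h1 : ∑ i ∈ S, u i = ∑ i, u i := Finset.sum_subset (Finset.subset_univ S)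
      (fun i _ hi => hu i hi)
    have h2 : ∑ z ∈ S.attach, u ↑z = ∑ i ∈ S, u i := Finset.sum_attach S u
    have h3 : ∑ a, u (g a) = ∑ z ∈ S.attach, u ↑z := by
      rw [← Finset.univ_eq_attach]
      exact Equiv.sum_comp e.toEquiv (fun z : {i // i ∈ S} => u ↑z)
    rw [h3, h2, h1]
  set A : Matrix (Fin k) (Fin k) ℤ := M.submatrix g g with hAdef
  set A' : Matrix (Fin k) (Fin k) ℝ := N.submatrix g g with hA'def
  have hA' : A' = (Int.castRingHom ℝ).mapMatrix A := by
    ext a b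
    simp [hA'def, hAdef, hNM]
  have hμne : μ ≠ 0 := ne_of_lt hμneg
  -- determinant is nonzero
  have hdet : A.det ≠ 0 := by
    intro h0
    have hdet' : A'.det = 0 := by
      rw [hA', ← RingHom.map_det, h0]
      simp
    obtain ⟨w, hw0, hww⟩ := Matrix.exists_mulVec_eq_zero_iff.2 hdet'
    set v : Fin n → ℝ := fun i => if h : i ∈ S then w (e.symm ⟨i, h⟩) else 0 with hvdef
    have hvg : ∀ a, v (g a) = w a := by
      intro a
      have hm := hgmem a
      simp only [hvdef, dif_pos hm]
      congr 1
      have : (⟨g a, hm⟩ : {i // i ∈ S}) = e a := Subtype.ext rfl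
      rw [this, OrderIso.symm_apply_apply]
    have hv0 : ∀ i ∉ S, v i = 0 := fun i hi => dif_neg hi
    have hNv : ∀ a, (N *ᵥ v) (g a) = 0 := by
      intro a
      have : (N *ᵥ v) (g a) = ∑ j, N (g a) j * v j := rfl
      rw [this, sumS (fun j => N (g a) j * v j) (fun j hj => by simp [hv0 j hj])]
      have : ∑ b, N (g a) (g b) * v (g b) = (A' *ᵥ w) a := by
        simp only [hA'def, Matrix.mulVec, dotProduct, Matrix.submatrix_apply]
        exact Finset.sum_congr rfl fun b _ => by rw [hvg b]
      rw [this, hww]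
      rfl
    have hNvS : ∀ i ∈ S, (N *ᵥ v) i = 0 := by
      intro i hi
      rw [← hgS i hi]
      exact hNv _
    have hvsum : ∑ i, v i = 0 := by
      have h1 : v ⬝ᵥ N *ᵥ x = μ * ∑ i, v i := by
        have e1 : v ⬝ᵥ N *ᵥ x = ∑ i, v i * (N *ᵥ x) i := rfl
        rw [e1, sumS (fun i => v i * (N *ᵥ x) i) (fun i hi => by simp [hv0 i hi]),
          sumS v hv0, Finset.mul_sum]
        exact Finset.sum_congr rfl fun a _ => by
          rw [hstat (g a) (hgmem a)]; ring
      have h2 : v ⬝ᵥ N *ᵥ x = 0 := by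
        rw [← quad_symm N hNsym x v]
        have : x ⬝ᵥ N *ᵥ v = ∑ i, x i * (N *ᵥ v) i := rfl
        rw [this, sumS (fun i => x i * (N *ᵥ v) i) (fun i hi => by simp [hxzero i hi])]
        apply Finset.sum_eq_zero
        intro a _
        rw [hNv a]; ring
      rw [h2] at h1
      exact (mul_eq_zero.1 h1.symm).resolve_left hμne
    have hvMx : v ⬝ᵥ N *ᵥ x = 0 := by
      rw [← quad_symm N hNsym x v]
      have : x ⬝ᵥ N *ᵥ v = ∑ i, x i * (N *ᵥ v) i := rfl
      rw [this, sumS (fun i => x i * (N *ᵥ v) i) (fun i hi => by simp [hxzero i hi])]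
      apply Finset.sum_eq_zero
      intro a _
      rw [hNv a]; ring
    have hvMv : v ⬝ᵥ N *ᵥ v = 0 := by
      have : v ⬝ᵥ N *ᵥ v = ∑ i, v i * (N *ᵥ v) i := rfl
      rw [this, sumS (fun i => v i * (N *ᵥ v) i) (fun i hi => by simp [hv0 i hi])]
      apply Finset.sum_eq_zero
      intro a _
      rw [hNv a]; ring
    have hvne : ∃ i, v i < 0 := by
      by_contra hc
      push_neg at hc
      have hall : ∀ i ∈ univ, v i = 0 := by
        intro i _
        have := (Finset.sum_eq_zero_iff_of_nonneg (fun i _ => hc i)).1 hvsum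
        exact this i (Finset.mem_univ i)
      obtain ⟨a, ha⟩ := Function.ne_iff.1 hw0
      exact ha (by rw [← hvg a, hall (g a) (Finset.mem_univ _)]; rfl)
    set F := univ.filter (fun i => v i < 0) with hFdef
    have hFne : F.Nonempty := by
      obtain ⟨i, hi⟩ := hvne
      exact ⟨i, Finset.mem_filter.2 ⟨Finset.mem_univ i, hi⟩⟩
    obtain ⟨i₁, hi₁F, hi₁min⟩ := F.exists_min_image (fun i => x i / (-v i)) hFne
    have hvi₁ : v i₁ < 0 := (Finset.mem_filter.1 hi₁F).2
    have hi₁S : i₁ ∈ S := by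
      by_contra hc
      rw [hv0 i₁ hc] at hvi₁
      exact lt_irrefl 0 hvi₁
    have hxi₁ : 0 < x i₁ := by
      have := Finset.mem_filter.1 hi₁S
      exact this.2
    set t : ℝ := x i₁ / (-v i₁) with htdef
    have ht : 0 < t := div_pos hxi₁ (by linarith)
    set x' : Fin n → ℝ := x + t • v with hx'def
    have hx'nn : ∀ i, 0 ≤ x' i := by
      intro i
      have : x' i = x i + t * v i := rfl
      rw [this]
      rcases lt_or_ge (v i) 0 with hvi | hvi
      · have hiF : i ∈ F := Finset.mem_filter.2 ⟨Finset.mem_univ i, hvi⟩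
        have h := hi₁min i hiF
        have hvpos : 0 < -v i := by linarith
        have : t * (-v i) ≤ x i := by
          calc t * (-v i) ≤ (x i / (-v i)) * (-v i) :=
              mul_le_mul_of_nonneg_right h hvpos.le
            _ = x i := by
              field_simp
              rw [mul_div_assoc, div_self (ne_of_lt hvi), mul_one]
        nlinarith
      · have : 0 ≤ t * v i := mul_nonneg ht.le hvi
        have := hxnn i
        linarith
    have hx'sum : ∑ i, x' i = 1 := by
      have : ∑ i, x' i = ∑ i, x i + t * ∑ i, v i := by
        simp [hx'def, Finset.sum_add_distrib, Finset.mul_sum]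
      rw [this, hxsum, hvsum]; ring
    have hx'mem : x' ∈ stdSimplex ℝ (Fin n) := ⟨hx'nn, hx'sum⟩
    have hx'q : x' ⬝ᵥ N *ᵥ x' = μ := by
      rw [hx'def, quad_expand N hNsym x v t, hxq, hvMx, hvMv]; ring
    have hx'zeroi₁ : x' i₁ = 0 := by
      have : x' i₁ = x i₁ + t * v i₁ := rfl
      rw [this, htdef]
      have hvne0 : -v i₁ ≠ 0 := by linarith
      field_simp
      rw [div_self (ne_of_lt hvi₁)]; ring
    have hsupp : univ.filter (fun i => 0 < x' i) ⊆ S.erase i₁ := by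
      intro i hi
      have hx'i : 0 < x' i := (Finset.mem_filter.1 hi).2
      apply Finset.mem_erase.2
      constructor
      · intro h
        rw [h, hx'zeroi₁] at hx'i
        exact lt_irrefl 0 hx'i
      · by_contra hc
        have h1 : x i = 0 := hxzero i hc
        have h2 : v i = 0 := hv0 i hc
        have : x' i = 0 := by
          have : x' i = x i + t * v i := rfl
          rw [this, h1, h2]; ring
        rw [this] at hx'i
        exact lt_irrefl 0 hx'i
    have hcard : (univ.filter (fun i => 0 < x' i)).card < k := by
      calc (univ.filter (fun i => 0 < x' i)).card ≤ (S.erase i₁).card :=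
          Finset.card_le_card hsupp
        _ < S.card := Finset.card_erase_lt_of_mem hi₁S
    have := hminsupp x' hx'mem hx'q
    omega
  -- adjugate identity
  set xS : Fin k → ℝ := fun a => x (g a) with hxSdef
  have hAxS : A' *ᵥ xS = fun _ => μ := by
    funext a
    have h1 : (A' *ᵥ xS) a = ∑ b, N (g a) (g b) * x (g b) := by
      simp [hA'def, Matrix.mulVec, dotProduct, hxSdef]
    have h2 : (N *ᵥ x) (g a) = ∑ j, N (g a) j * x j := rfl
    rw [h1, ← sumS (fun j => N (g a) j * x j) (fun j hj => by simp [hxzero j hj]), ← h2]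
    exact hstat (g a) (hgmem a)
  have hsum1 : ∑ a, xS a = 1 := by
    rw [← sumS x hxzero, hxsum]
  have hkey : A'.det = μ * (∑ a, ∑ b, A'.adjugate a b) := by
    have h1 : A'.adjugate *ᵥ (A' *ᵥ xS) = A'.det • xS := by
      rw [Matrix.mulVec_mulVec, Matrix.adjugate_mul, Matrix.smul_mulVec, Matrix.one_mulVec]
    have h2 : ∑ a, (A'.adjugate *ᵥ (A' *ᵥ xS)) a = ∑ a, A'.det * xS a := by
      rw [h1]; rfl
    have h3 : ∑ a, A'.det * xS a = A'.det := by
      rw [← Finset.mul_sum, hsum1, mul_one]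
    have h4 : ∑ a, (A'.adjugate *ᵥ (A' *ᵥ xS)) a = μ * (∑ a, ∑ b, A'.adjugate a b) := by
      rw [hAxS]
      simp only [Matrix.mulVec, dotProduct]
      rw [Finset.mul_sum]
      refine Finset.sum_congr rfl fun a _ => ?_
      rw [Finset.mul_sum]
      exact Finset.sum_congr rfl fun b _ => mul_comm _ _
    rw [← h4, h2, h3]
  have hadjc : ∀ a b, A'.adjugate a b = ((A.adjugate a b : ℤ) : ℝ) := by
    intro a b
    rw [hA', ← RingHom.map_adjugate]
    rfl
  set ee : ℤ := ∑ a, ∑ b, A.adjugate a b with heedef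
  have heec : ((ee : ℤ) : ℝ) = ∑ a, ∑ b, A'.adjugate a b := by
    rw [heedef]
    push_cast
    exact Finset.sum_congr rfl fun a _ => Finset.sum_congr rfl fun b _ => (hadjc a b).symm
  have hdetc : ((A.det : ℤ) : ℝ) = A'.det := by
    rw [hA', ← RingHom.map_det]
    rfl
  have hdetmu : ((A.det : ℤ) : ℝ) = μ * ((ee : ℤ) : ℝ) := by
    rw [hdetc, heec, hkey]
  refine ⟨k, g, hginj, ?_, ?_⟩
  · calc k = S.card := rfl
      _ ≤ Fintype.card (Fin n) := Finset.card_le_univ S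
      _ = n := Fintype.card_fin n
  · have h1 : (1:ℝ) ≤ |((A.det : ℤ) : ℝ)| := by
      have := Int.one_le_abs hdet
      calc (1:ℝ) = ((1:ℤ) : ℝ) := by norm_num
        _ ≤ ((|A.det| : ℤ) : ℝ) := by exact_mod_cast this
        _ = |((A.det : ℤ) : ℝ)| := by push_cast; ring
    rw [hdetmu, abs_mul, abs_of_neg hμneg] at h1
    have : |((ee : ℤ) : ℝ)| = (ee.natAbs : ℝ) := by
      rw [Nat.cast_natAbs, Int.cast_abs]
    rw [this] at h1
    exact h1

lemma natAbs_sum_le' {ι : Type*} (s : Finset ι) (f : ι → ℤ) :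
    (∑ i ∈ s, f i).natAbs ≤ ∑ i ∈ s, (f i).natAbs := by
  classical
  induction s using Finset.induction with
  | empty => simp
  | insert _ _ h ih =>
    rw [Finset.sum_insert h, Finset.sum_insert h]
    exact le_trans (Int.natAbs_add_le _ _) (Nat.add_le_add le_rfl ih)

lemma natAbs_prod' {ι : Type*} (s : Finset ι) (f : ι → ℤ) :
    (∏ i ∈ s, f i).natAbs = ∏ i ∈ s, (f i).natAbs := by
  classical
  induction s using Finset.induction with
  | empty => simp
  | insert _ _ h ih =>
    rw [Finset.prod_insert h, Finset.prod_insert h, Int.natAbs_mul, ih]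

lemma pairs_card (n : ℕ) :
    2 * ((univ : Finset (Fin n × Fin n)).filter (fun p => p.1 ≤ p.2)).card = n ^ 2 + n := by
  classical
  have h1 : ((univ : Finset (Fin n × Fin n)).filter (fun p => p.1 ≤ p.2)).card
      + ((univ : Finset (Fin n × Fin n)).filter (fun p => ¬ p.1 ≤ p.2)).card = n ^ 2 := by
    rw [Finset.card_filter_add_card_filter_not]
    simp [Finset.card_univ, sq]
  have h2 : ((univ : Finset (Fin n × Fin n)).filter (fun p => ¬ p.1 ≤ p.2)).card
      = ((univ : Finset (Fin n × Fin n)).filter (fun p => p.1 < p.2)).card := by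
    apply Finset.card_nbij' (fun p => (p.2, p.1)) (fun p => (p.2, p.1))
    · intro p hp
      simp only [Finset.mem_coe, Finset.mem_filter, Finset.mem_univ, true_and, not_le] at hp ⊢
      exact hp
    · intro p hp
      simp only [Finset.mem_coe, Finset.mem_filter, Finset.mem_univ, true_and, not_le] at hp ⊢
      exact hp
    · intro p _; rfl
    · intro p _; rfl
  have h3 : ((univ : Finset (Fin n × Fin n)).filter (fun p => p.1 ≤ p.2))
      = ((univ : Finset (Fin n × Fin n)).filter (fun p => p.1 < p.2))
        ∪ ((univ : Finset (Fin n × Fin n)).filter (fun p => p.1 = p.2)) := by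
    rw [← Finset.filter_or]
    apply Finset.filter_congr
    intro p _
    simp [le_iff_lt_or_eq]
  have h4 : ((univ : Finset (Fin n × Fin n)).filter (fun p => p.1 = p.2)).card = n := by
    have : ((univ : Finset (Fin n × Fin n)).filter (fun p => p.1 = p.2)).card
        = (univ : Finset (Fin n)).card := by
      apply Finset.card_nbij' (fun p => p.1) (fun i => (i, i))
      · intro p _; exact Finset.mem_univ _
      · intro i _; simp
      · intro p hp
        simp only [Finset.mem_coe, Finset.mem_filter] at hp
        exact Prod.ext rfl hp.2
      · intro i _; rfl
    rw [this, Finset.card_univ, Fintype.card_fin]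
  have h5 : ((univ : Finset (Fin n × Fin n)).filter (fun p => p.1 ≤ p.2)).card
      = ((univ : Finset (Fin n × Fin n)).filter (fun p => p.1 < p.2)).card + n := by
    rw [h3, Finset.card_union_of_disjoint, h4]
    rw [Finset.disjoint_filter]
    intro p _ hp
    exact ne_of_lt hp
  omega

lemma adj_entry_bound {n k : ℕ} (M : Matrix (Fin n) (Fin n) ℤ) (g : Fin k → Fin n)
    (hg : Function.Injective g) (a b : Fin k) :
    ((M.submatrix g g).adjugate a b).natAbs
      ≤ k.factorial * ∏ p : Fin n × Fin n, ((M p.1 p.2).natAbs + 1) := by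
  classical
  set P := ∏ p : Fin n × Fin n, ((M p.1 p.2).natAbs + 1) with hPdef
  rw [Matrix.adjugate_apply, Matrix.det_apply]
  set B := (M.submatrix g g).updateRow b (Pi.single a 1) with hBdef
  calc (∑ σ : Equiv.Perm (Fin k), Equiv.Perm.sign σ • ∏ i, B (σ i) i).natAbs
      ≤ ∑ σ : Equiv.Perm (Fin k), (Equiv.Perm.sign σ • ∏ i, B (σ i) i).natAbs :=
        natAbs_sum_le' _ _
    _ ≤ ∑ _σ : Equiv.Perm (Fin k), P := by
        apply Finset.sum_le_sum
        intro σ _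
        rw [Units.smul_def, smul_eq_mul, Int.natAbs_mul, Int.units_natAbs, one_mul,
          natAbs_prod']
        -- bound the product for a single permutation
        have hfac : ∀ i, (B (σ i) i).natAbs
            ≤ (if σ i = b then 1 else ((M (g (σ i)) (g i)).natAbs + 1)) := by
          intro i
          by_cases h : σ i = b
          · rw [if_pos h]
            have : B (σ i) i = (Pi.single a 1 : Fin k → ℤ) i := by
              rw [hBdef, Matrix.updateRow_apply, if_pos h]
            rw [this, Pi.single_apply]
            by_cases h2 : i = a <;> simp [h2]
          · rw [if_neg h]
            have : B (σ i) i = M (g (σ i)) (g i) := by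
              rw [hBdef, Matrix.updateRow_apply, if_neg h, Matrix.submatrix_apply]
            rw [this]
            exact Nat.le_succ _
        calc ∏ i, (B (σ i) i).natAbs
            ≤ ∏ i, (if σ i = b then 1 else ((M (g (σ i)) (g i)).natAbs + 1)) :=
              Finset.prod_le_prod' fun i _ => hfac i
          _ = ∏ i ∈ univ.filter (fun i => ¬ σ i = b),
                ((M (g (σ i)) (g i)).natAbs + 1) := by
              rw [Finset.prod_filter]
              exact Finset.prod_congr rfl fun i _ => by by_cases h : σ i = b <;> simp [h]
          _ = ∏ p ∈ (univ.filter (fun i => ¬ σ i = b)).image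
                (fun i => (g (σ i), g i)), ((M p.1 p.2).natAbs + 1) := by
              rw [Finset.prod_image]
              intro i _ j _ hij
              have := congrArg Prod.snd hij
              exact hg this
          _ ≤ P := by
              rw [hPdef]
              exact Finset.prod_le_prod_of_subset_of_one_le'
                (Finset.subset_univ _) (fun p _ _ => Nat.succ_le_succ (Nat.zero_le _))
    _ = k.factorial * P := by
        rw [Finset.sum_const, Finset.card_univ, Fintype.card_perm, Fintype.card_fin,
          smul_eq_mul]

lemma fact_bound {n : ℕ} (hn : 1 ≤ n) : 4 * (n ^ 2 * n.factorial) ≤ 2 ^ (n ^ 2 + n) := by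
  obtain ⟨m, rfl⟩ : ∃ m, n = m + 1 := ⟨n - 1, by omega⟩
  have h1 : m + 1 ≤ 2 ^ m := Nat.lt_two_pow_self
  have h2 : (m + 1).factorial ≤ (m + 1) ^ (m + 1) := Nat.factorial_le_pow _
  have h3 : (m + 1) ^ (m + 1) ≤ (2 ^ m) ^ (m + 1) := Nat.pow_le_pow_left h1 _
  have h4 : (m + 1) ^ 2 ≤ (2 ^ m) ^ 2 := Nat.pow_le_pow_left h1 _
  calc 4 * ((m + 1) ^ 2 * (m + 1).factorial)
      ≤ 4 * ((2 ^ m) ^ 2 * (2 ^ m) ^ (m + 1)) := by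
        apply Nat.mul_le_mul_left
        exact Nat.mul_le_mul h4 (le_trans h2 h3)
    _ = 2 ^ ((m + 1) ^ 2 + (m + 1)) := by
        rw [show (4 : ℕ) = 2 ^ 2 from rfl, ← pow_mul, ← pow_mul, ← pow_add, ← pow_add]
        congr 1
        ring
  
lemma encoding_bound {n : ℕ} (hn : 1 ≤ n) (M : Matrix (Fin n) (Fin n) ℤ) (hsym : M.IsSymm)
    (L : ℕ) (hL : L = encodingLength M) :
    (∏ p : Fin n × Fin n, ((M p.1 p.2).natAbs + 1)) * 2 ^ (n ^ 2 + n) ≤ 2 ^ (2 * L)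
      ∧ 1 ≤ L := by
  classical
  set f : Fin n × Fin n → ℕ := fun p => (M p.1 p.2).natAbs + 1 with hfdef
  set pr := (univ : Finset (Fin n × Fin n)).filter (fun p => p.1 ≤ p.2) with hprdef
  have hLsum : L = ∑ p ∈ pr, (Nat.clog 2 (f p) + 1) := by
    rw [hL, encodingLength, hprdef]
    rw [Finset.sum_filter, ← Finset.univ_product_univ, Finset.sum_product]
    exact Finset.sum_congr rfl fun i _ => by
      rw [Finset.sum_filter]
  have hprne : pr.Nonempty := by
    refine ⟨((⟨0, hn⟩ : Fin n), (⟨0, hn⟩ : Fin n)), ?_⟩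
    simp [hprdef]
  have hL1 : 1 ≤ L := by
    rw [hLsum]
    calc 1 ≤ pr.card := Finset.card_pos.2 hprne
      _ = ∑ _p ∈ pr, 1 := by rw [Finset.sum_const, smul_eq_mul, mul_one]
      _ ≤ ∑ p ∈ pr, (Nat.clog 2 (f p) + 1) := Finset.sum_le_sum fun p _ => Nat.le_add_left 1 _
  refine ⟨?_, hL1⟩
  have hsplit : (∏ p : Fin n × Fin n, f p)
      = (∏ p ∈ pr, f p) * ∏ p ∈ univ.filter (fun p : Fin n × Fin n => ¬ p.1 ≤ p.2), f p := by
    rw [hprdef, Finset.prod_filter_mul_prod_filter_not]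
  have hswap : ∏ p ∈ univ.filter (fun p : Fin n × Fin n => ¬ p.1 ≤ p.2), f p
      = ∏ p ∈ univ.filter (fun p : Fin n × Fin n => p.2 < p.1), f p := by
    apply Finset.prod_congr
    · apply Finset.filter_congr
      intro p _
      simp [not_le]
    · intros; rfl
  have hsymm : ∀ p : Fin n × Fin n, f (p.2, p.1) = f p := by
    intro p
    simp only [hfdef]
    congr 2
    have := congrFun (congrFun hsym p.1) p.2
    simpa [Matrix.transpose_apply] using this
  have hswap2 : ∏ p ∈ univ.filter (fun p : Fin n × Fin n => p.2 < p.1), f p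
      = ∏ p ∈ univ.filter (fun p : Fin n × Fin n => p.1 < p.2), f p := by
    apply Finset.prod_nbij' (fun p => (p.2, p.1)) (fun p => (p.2, p.1))
    · intro p hp
      simp only [Finset.mem_filter, Finset.mem_univ, true_and] at hp ⊢
      exact hp
    · intro p hp
      simp only [Finset.mem_filter, Finset.mem_univ, true_and] at hp ⊢
      exact hp
    · intro p _; rfl
    · intro p _; rfl
    · intro p _
      exact (hsymm p).symm
  have hle : ∏ p ∈ univ.filter (fun p : Fin n × Fin n => p.1 < p.2), f p ≤ ∏ p ∈ pr, f p := by
    apply Finset.prod_le_prod_of_subset_of_one_le'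
    · intro p hp
      simp only [hprdef, Finset.mem_filter, Finset.mem_univ, true_and] at hp ⊢
      exact le_of_lt hp
    · intro p _ _
      exact Nat.succ_le_succ (Nat.zero_le _)
  have hPQ : (∏ p : Fin n × Fin n, f p) ≤ (∏ p ∈ pr, f p) ^ 2 := by
    rw [hsplit, sq]
    exact Nat.mul_le_mul le_rfl (by rw [hswap, hswap2]; exact hle)
  have hcard : 2 ^ (n ^ 2 + n) = 4 ^ pr.card := by
    have hpc : 2 * pr.card = n ^ 2 + n := pairs_card n
    rw [show (4:ℕ) = 2 ^ 2 from rfl, ← pow_mul]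
    congr 1
    omega
  have hQbound : (∏ p ∈ pr, f p) ^ 2 * 4 ^ pr.card ≤ 4 ^ L := by
    calc (∏ p ∈ pr, f p) ^ 2 * 4 ^ pr.card
        = ∏ p ∈ pr, (f p ^ 2 * 4) := by
          rw [Finset.prod_mul_distrib, Finset.prod_pow, Finset.prod_const]
      _ ≤ ∏ p ∈ pr, 4 ^ (Nat.clog 2 (f p) + 1) := by
          apply Finset.prod_le_prod' 
          intro p _
          have h1 : f p ≤ 2 ^ Nat.clog 2 (f p) := Nat.le_pow_clog one_lt_two _
          calc f p ^ 2 * 4 ≤ (2 ^ Nat.clog 2 (f p)) ^ 2 * 4 :=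
              Nat.mul_le_mul_right _ (Nat.pow_le_pow_left h1 2)
            _ = 4 ^ (Nat.clog 2 (f p) + 1) := by
              rw [← pow_mul, pow_add, pow_one, show (4:ℕ) = 2^2 from rfl, ← pow_mul]
              ring_nf
      _ = 4 ^ (∑ p ∈ pr, (Nat.clog 2 (f p) + 1)) := Finset.prod_pow_eq_pow_sum _ _ _
      _ = 4 ^ L := by rw [← hLsum]
  calc (∏ p : Fin n × Fin n, f p) * 2 ^ (n ^ 2 + n)
      ≤ (∏ p ∈ pr, f p) ^ 2 * 4 ^ pr.card := by
        rw [← hcard]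
        exact Nat.mul_le_mul_right _ hPQ
    _ ≤ 4 ^ L := hQbound
    _ = 2 ^ (2 * L) := by
        rw [show (4:ℕ) = 2 ^ 2 from rfl, ← pow_mul]


theorem stmt18 {n : ℕ} (hn : 1 ≤ n) (M : Matrix (Fin n) (Fin n) ℤ)
    (hsym : M.IsSymm)
    (hncop : ∃ x : Fin n → ℝ, (∀ i, 0 ≤ x i) ∧
      x ⬝ᵥ (M.map ((↑) : ℤ → ℝ)) *ᵥ x < 0)
    (L d : ℕ) (hL : L = encodingLength M) (hd : d = maxAbs M)
    (l : ℕ) (hl : 4 * d * n ^ 2 ≤ 2 ^ l)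
    (hlmin : ∀ l' : ℕ, 4 * d * n ^ 2 ≤ 2 ^ l' → l ≤ l') :
    ∃ y : Fin n → ℚ, (∀ j, 0 ≤ y j) ∧
      y ⬝ᵥ (M.map ((↑) : ℤ → ℚ)) *ᵥ y < 0 ∧
      ∀ j, ∃ a : ℕ, y j = (a : ℚ) / 2 ^ l ∧
        (a : ℚ) / 2 ^ l ≤ 2 ^ (2 * L - 1) + 1 := by
  classical
  set N : Matrix (Fin n) (Fin n) ℝ := M.map ((↑) : ℤ → ℝ) with hN
  have hNsym : Nᵀ = N := by
    ext i j
    simp only [hN, Matrix.transpose_apply, Matrix.map_apply]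
    exact_mod_cast congrFun (congrFun hsym i) j
  obtain ⟨μ, hμneg, x, hxmem, hxq, hstat, hminsupp, hmin⟩ := part1 hn N hNsym hncop
  obtain ⟨k, g, hginj, hkn, hμE⟩ := part2 M N hN hNsym μ hμneg x hxmem hxq hstat hminsupp
  obtain ⟨hPbound, hL1⟩ := encoding_bound hn M hsym L hL
  set P : ℕ := ∏ p : Fin n × Fin n, ((M p.1 p.2).natAbs + 1) with hPdef
  set E : ℕ := (∑ a, ∑ b, (M.submatrix g g).adjugate a b).natAbs with hEdef
  -- bound on E
  have hEb : 4 * E ≤ 2 ^ (2 * L) := by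
    have h1 : E ≤ k ^ 2 * (k.factorial * P) := by
      calc E ≤ ∑ a, (∑ b, (M.submatrix g g).adjugate a b).natAbs := natAbs_sum_le' _ _
        _ ≤ ∑ a : Fin k, ∑ b : Fin k, ((M.submatrix g g).adjugate a b).natAbs :=
            Finset.sum_le_sum fun a _ => natAbs_sum_le' _ _
        _ ≤ ∑ _a : Fin k, ∑ _b : Fin k, (k.factorial * P) :=
            Finset.sum_le_sum fun a _ => Finset.sum_le_sum fun b _ =>
              adj_entry_bound M g hginj a b
        _ = k ^ 2 * (k.factorial * P) := by
            simp [Finset.sum_const, Finset.card_univ, mul_assoc, sq]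
    have h2 : k ^ 2 * (k.factorial * P) ≤ n ^ 2 * (n.factorial * P) :=
      Nat.mul_le_mul (Nat.pow_le_pow_left hkn 2)
        (Nat.mul_le_mul_right _ (Nat.factorial_le hkn))
    calc 4 * E ≤ 4 * (n ^ 2 * (n.factorial * P)) :=
        Nat.mul_le_mul_left _ (le_trans h1 h2)
      _ = (4 * (n ^ 2 * n.factorial)) * P := by ring
      _ ≤ 2 ^ (n ^ 2 + n) * P := Nat.mul_le_mul_right _ (fact_bound hn)
      _ = P * 2 ^ (n ^ 2 + n) := by ring
      _ ≤ 2 ^ (2 * L) := hPbound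
  have hE1 : 1 ≤ E := by
    rcases Nat.eq_zero_or_pos E with h0 | h1
    · rw [h0] at hμE
      norm_num at hμE
    · exact h1
  set B : ℕ := 2 ^ (2 * L - 1) + 1 with hBdef
  have hEltB : E < B := by
    have hpow : 2 ^ (2 * L) = 2 * 2 ^ (2 * L - 1) := by
      rw [← pow_succ']
      congr 1
      omega
    rw [hpow] at hEb
    omega
  -- simplex facts
  have hxnn : ∀ i, 0 ≤ x i := hxmem.1
  have hxsum : ∑ i, x i = 1 := hxmem.2
  have hx1 : ∀ j, x j ≤ 1 := by
    intro j
    rw [← hxsum]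
    exact Finset.single_le_sum (fun i _ => hxnn i) (Finset.mem_univ j)
  -- the dyadic vector
  set a : Fin n → ℕ := fun j => ⌊(B : ℝ) * x j * 2 ^ l⌋₊ with hadef
  set y : Fin n → ℚ := fun j => (a j : ℚ) / 2 ^ l with hydef
  set yr : Fin n → ℝ := fun j => (a j : ℝ) / 2 ^ l with hyrdef
  set z : Fin n → ℝ := fun j => (B : ℝ) * x j with hzdef
  have hlpos : (0:ℝ) < 2 ^ l := by positivity
  have hBpos : (0:ℝ) < (B:ℝ) := by
    have : 0 < B := by omega
    exact_mod_cast this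
  set h : ℝ := ((2:ℝ) ^ l)⁻¹ with hhdef
  have hhpos : 0 < h := by rw [hhdef]; positivity
  have haB : ∀ j, a j ≤ B * 2 ^ l := by
    intro j
    have h1 : (B : ℝ) * x j * 2 ^ l ≤ ((B * 2 ^ l : ℕ) : ℝ) := by
      have h2 : (B:ℝ) * x j * 2 ^ l ≤ (B:ℝ) * 1 * 2 ^ l :=
        mul_le_mul_of_nonneg_right
          (mul_le_mul_of_nonneg_left (hx1 j) hBpos.le) hlpos.le
      calc (B:ℝ) * x j * 2 ^ l ≤ (B:ℝ) * 1 * 2 ^ l := h2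
        _ = ((B * 2 ^ l : ℕ) : ℝ) := by push_cast; ring
    calc a j = ⌊(B : ℝ) * x j * 2 ^ l⌋₊ := rfl
      _ ≤ ⌊((B * 2 ^ l : ℕ) : ℝ)⌋₊ := Nat.floor_mono h1
      _ = B * 2 ^ l := Nat.floor_natCast _
  have hyr_le : ∀ j, yr j ≤ z j := by
    intro j
    have h1 : (a j : ℝ) ≤ (B : ℝ) * x j * 2 ^ l :=
      Nat.floor_le (mul_nonneg (mul_nonneg hBpos.le (hxnn j)) hlpos.le)
    show (a j : ℝ) / 2 ^ l ≤ (B : ℝ) * x j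
    rw [div_le_iff₀ hlpos]
    exact h1
  have hyr_ge : ∀ j, z j ≤ yr j + h := by
    intro j
    have h1 : (B : ℝ) * x j * 2 ^ l < (a j : ℝ) + 1 := Nat.lt_floor_add_one _
    show (B : ℝ) * x j ≤ (a j : ℝ) / 2 ^ l + h
    have h2 : (B:ℝ) * x j ≤ ((a j : ℝ) + 1) / 2 ^ l := by
      rw [le_div_iff₀ hlpos]
      exact le_of_lt h1
    have h3 : ((a j : ℝ) + 1) / 2 ^ l = (a j : ℝ) / 2 ^ l + h := by
      rw [hhdef, add_div, one_div]
    rw [← h3]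
    exact h2
  have hyr0 : ∀ j, 0 ≤ yr j := by
    intro j
    show (0:ℝ) ≤ (a j : ℝ) / 2 ^ l
    positivity
  have hz0 : ∀ j, 0 ≤ z j := fun j => mul_nonneg hBpos.le (hxnn j)
  have hzB : ∀ j, z j ≤ B := by
    intro j
    show (B : ℝ) * x j ≤ (B:ℝ)
    calc (B:ℝ) * x j ≤ (B:ℝ) * 1 := mul_le_mul_of_nonneg_left (hx1 j) hBpos.le
      _ = (B:ℝ) := mul_one _
  have hyrB : ∀ j, yr j ≤ B := fun j => le_trans (hyr_le j) (hzB j)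
  -- quadratic form value at z
  have hqz : z ⬝ᵥ N *ᵥ z = (B:ℝ) ^ 2 * μ := by
    have hzx : z = (B:ℝ) • x := by
      funext j
      show (B:ℝ) * x j = (B:ℝ) • x j
      rw [smul_eq_mul]
    rw [hzx, quad_smul, hxq]
  -- expand quadratic forms as double sums
  have hexp : ∀ u : Fin n → ℝ, u ⬝ᵥ N *ᵥ u = ∑ i, ∑ j, N i j * (u i * u j) := by
    intro u
    have h1 : u ⬝ᵥ N *ᵥ u = ∑ i, u i * ∑ j, N i j * u j := rfl
    rw [h1]
    refine Finset.sum_congr rfl fun i _ => ?_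
    rw [Finset.mul_sum]
    exact Finset.sum_congr rfl fun j _ => by ring
  -- error bound
  have hdnh : (d:ℝ) * n ^ 2 * h ≤ 1 / 4 := by
    have h1 : (4:ℝ) * (d:ℝ) * (n:ℝ) ^ 2 ≤ (2:ℝ) ^ l := by exact_mod_cast hl
    have h2 : (d:ℝ) * n ^ 2 ≤ 2 ^ l / 4 := by linarith
    calc (d:ℝ) * n ^ 2 * h ≤ (2 ^ l / 4) * h :=
        mul_le_mul_of_nonneg_right h2 hhpos.le
      _ = 1 / 4 := by
        rw [hhdef]
        field_simp
  have hNd : ∀ i j, |N i j| ≤ (d:ℝ) := by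
    intro i j
    have h1 : (M i j).natAbs ≤ d := by
      rw [hd, maxAbs]
      exact Finset.le_sup (f := fun p : Fin n × Fin n => (M p.1 p.2).natAbs)
        (Finset.mem_univ (i, j))
    have h2 : |N i j| = ((M i j).natAbs : ℝ) := by
      simp only [hN, Matrix.map_apply]
      rw [Nat.cast_natAbs, Int.cast_abs]
    rw [h2]
    exact_mod_cast h1
  have hterm : ∀ i j, |yr i * yr j - z i * z j| ≤ 2 * B * h := by
    intro i j
    have e1 : yr i * yr j - z i * z j = (yr i - z i) * yr j + z i * (yr j - z j) := by ring
    have h1 : |yr i - z i| ≤ h := by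
      rw [abs_le]
      constructor
      · have := hyr_ge i; linarith
      · have := hyr_le i; linarith [hhpos]
    have h2 : |yr j - z j| ≤ h := by
      rw [abs_le]
      constructor
      · have := hyr_ge j; linarith
      · have := hyr_le j; linarith [hhpos]
    have h3 : |yr j| ≤ B := by rw [abs_of_nonneg (hyr0 j)]; exact hyrB j
    have h4 : |z i| ≤ B := by rw [abs_of_nonneg (hz0 i)]; exact hzB i
    calc |yr i * yr j - z i * z j| = |(yr i - z i) * yr j + z i * (yr j - z j)| := by rw [e1]
      _ ≤ |(yr i - z i) * yr j| + |z i * (yr j - z j)| := abs_add_le _ _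
      _ = |yr i - z i| * |yr j| + |z i| * |yr j - z j| := by rw [abs_mul, abs_mul]
      _ ≤ h * B + B * h :=
          add_le_add (mul_le_mul h1 h3 (abs_nonneg _) hhpos.le)
            (mul_le_mul h4 h2 (abs_nonneg _) hBpos.le)
      _ = 2 * B * h := by ring
  have hqyr : yr ⬝ᵥ N *ᵥ yr ≤ (B:ℝ) ^ 2 * μ + n ^ 2 * ((d:ℝ) * (2 * B * h)) := by
    have hdiff : yr ⬝ᵥ N *ᵥ yr - z ⬝ᵥ N *ᵥ z
        = ∑ i, ∑ j, N i j * (yr i * yr j - z i * z j) := by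
      rw [hexp yr, hexp z, ← Finset.sum_sub_distrib]
      refine Finset.sum_congr rfl fun i _ => ?_
      rw [← Finset.sum_sub_distrib]
      exact Finset.sum_congr rfl fun j _ => by ring
    have habs : ∑ i, ∑ j, N i j * (yr i * yr j - z i * z j)
        ≤ n ^ 2 * ((d:ℝ) * (2 * B * h)) := by
      calc ∑ i, ∑ j, N i j * (yr i * yr j - z i * z j)
          ≤ |∑ i, ∑ j, N i j * (yr i * yr j - z i * z j)| := le_abs_self _
        _ ≤ ∑ i, |∑ j, N i j * (yr i * yr j - z i * z j)| :=
            Finset.abs_sum_le_sum_abs _ _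
        _ ≤ ∑ i : Fin n, ∑ j : Fin n, |N i j * (yr i * yr j - z i * z j)| :=
            Finset.sum_le_sum fun i _ => Finset.abs_sum_le_sum_abs _ _
        _ ≤ ∑ _i : Fin n, ∑ _j : Fin n, (d:ℝ) * (2 * B * h) := by
            refine Finset.sum_le_sum fun i _ => Finset.sum_le_sum fun j _ => ?_
            rw [abs_mul]
            exact mul_le_mul (hNd i j) (hterm i j) (abs_nonneg _)
              (by exact_mod_cast Nat.zero_le d)
        _ = n ^ 2 * ((d:ℝ) * (2 * B * h)) := by
            rw [Finset.sum_const, Finset.sum_const, Finset.card_univ, Fintype.card_fin]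
            rw [nsmul_eq_mul, nsmul_eq_mul]
            ring
    have h5 : yr ⬝ᵥ N *ᵥ yr - z ⬝ᵥ N *ᵥ z ≤ n ^ 2 * ((d:ℝ) * (2 * B * h)) := by
      rw [hdiff]
      exact habs
    linarith [h5, hqz.ge, hqz.le]
  -- final negativity over ℝ
  have hfinal : yr ⬝ᵥ N *ᵥ yr < 0 := by
    have hu : 0 < -μ := neg_pos.2 hμneg
    have hEcast : (E:ℝ) < (B:ℝ) := by exact_mod_cast hEltB
    have hE1r : (1:ℝ) ≤ (E:ℝ) := by exact_mod_cast hE1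
    have huB : 1 ≤ (-μ) * B := by
      calc (1:ℝ) ≤ (-μ) * E := hμE
        _ ≤ (-μ) * B := mul_le_mul_of_nonneg_left hEcast.le hu.le
    have hBB : (B:ℝ) ≤ (-μ) * (B:ℝ) ^ 2 := by
      nlinarith [mul_le_mul_of_nonneg_left huB hBpos.le]
    have herr : (n:ℝ) ^ 2 * ((d:ℝ) * (2 * B * h)) ≤ (B:ℝ) / 2 := by
      calc (n:ℝ) ^ 2 * ((d:ℝ) * (2 * B * h)) = 2 * (B:ℝ) * ((d:ℝ) * n ^ 2 * h) := by ring
        _ ≤ 2 * (B:ℝ) * (1 / 4) :=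
            mul_le_mul_of_nonneg_left hdnh (by positivity)
        _ = (B:ℝ) / 2 := by ring
    calc yr ⬝ᵥ N *ᵥ yr ≤ (B:ℝ) ^ 2 * μ + n ^ 2 * ((d:ℝ) * (2 * B * h)) := hqyr
      _ ≤ (B:ℝ) ^ 2 * μ + (B:ℝ) / 2 := by linarith
      _ < 0 := by nlinarith [hBB, hBpos]
  refine ⟨y, ?_, ?_, ?_⟩
  · intro j
    show (0:ℚ) ≤ (a j : ℚ) / 2 ^ l
    positivity
  · have hcast : ((y ⬝ᵥ (M.map ((↑) : ℤ → ℚ)) *ᵥ y : ℚ) : ℝ) = yr ⬝ᵥ N *ᵥ yr := by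
      have e1 : y ⬝ᵥ (M.map ((↑) : ℤ → ℚ)) *ᵥ y
          = ∑ i, y i * ∑ j, (M i j : ℚ) * y j := rfl
      have e2 : yr ⬝ᵥ N *ᵥ yr = ∑ i, yr i * ∑ j, (M i j : ℝ) * yr j := rfl
      rw [e1, e2]
      simp only [hydef, hyrdef]
      push_cast
      refine Finset.sum_congr rfl fun i _ => ?_
      refine congrArg₂ (· * ·) rfl ?_
      exact Finset.sum_congr rfl fun j _ => rfl
    have hlt : ((y ⬝ᵥ (M.map ((↑) : ℤ → ℚ)) *ᵥ y : ℚ) : ℝ) < 0 := by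
      rw [hcast]; exact hfinal
    exact_mod_cast hlt
  · intro j
    refine ⟨a j, rfl, ?_⟩
    have h1 : (a j : ℚ) ≤ (B : ℚ) * 2 ^ l := by exact_mod_cast haB j
    have h2 : (a j : ℚ) / 2 ^ l ≤ (B:ℚ) := by
      rw [div_le_iff₀ (by positivity : (0:ℚ) < 2 ^ l)]
      exact h1
    calc (a j : ℚ) / 2 ^ l ≤ (B:ℚ) := h2
      _ = 2 ^ (2 * L - 1) + 1 := by
        rw [hBdef]
        push_cast
        ring
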